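/- Let S = {f₁, ..., fₙ} be a complete difference tone scale. Then every element fᵢ of S is a rational multiple of the largest element fₙ, i.e., S ⊆ fₙ·ℚ. -/

import Mathlib

/-- Every element of a complete difference tone scale is a rational multiple
of the largest element. -/
theorem complete_difference_tone_scale_subset_max_rat
    (S : Finset ℝ) (hne : S.Nonempty) (hpos : ∀ x ∈ S, 0 < x)
    (hcdts : ∀ x ∈ S, ∀ y ∈ S, y < x → ∃ z ∈ S, ∃ t : ℤ, x - y = 2 ^ t * z) :
    ∀ a ∈ S, ∃ q : ℚ, a = q * S.max' hne := by
  intro a ha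
  by_contra hcon
  push_neg at hcon
  set M := S.max' hne with hMdef
  have hM : M ∈ S := S.max'_mem hne
  have hMpos : 0 < M := hpos M hM
  have hapos : 0 < a := hpos a ha
  have haM : a ≠ M := by
    intro h
    exact hcon 1 (by rw [h]; norm_num)
  -- {M, a} is linearly independent over ℚ
  have hli2 : LinearIndependent ℚ ![M, a] := by
    rw [LinearIndependent.pair_iff]
    intro p q hpq
    have hpq' : (p : ℝ) * M + (q : ℝ) * a = 0 := by
      simpa [Rat.smul_def] using hpq
    by_cases hq : q = 0
    · subst hq
      simp only [Rat.cast_zero, zero_mul, add_zero] at hpq'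
      have hp : (p : ℝ) = 0 := by
        rcases mul_eq_zero.mp hpq' with h | h
        · exact h
        · exact absurd h (ne_of_gt hMpos)
      exact ⟨by exact_mod_cast hp, rfl⟩
    · exfalso
      apply hcon (-p / q)
      have hq' : (q : ℝ) ≠ 0 := by exact_mod_cast hq
      push_cast
      field_simp
      linarith [hpq']
  have hli : LinearIndepOn ℚ id ({M, a} : Set ℝ) := by
    have hr : Set.range ![M, a] = ({M, a} : Set ℝ) := by
      ext x
      simp [Fin.exists_fin_two]
      tauto
    have := hli2.linearIndepOn_id
    rwa [hr] at this
  have hMe : M ∈ hli.extend (Set.subset_univ _) :=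
    Module.Basis.subset_extend hli (by simp)
  have hae : a ∈ hli.extend (Set.subset_univ _) :=
    Module.Basis.subset_extend hli (by simp)
  set B := Module.Basis.extend hli with hB
  set φ : ℝ → ℚ := fun x => B.repr x ⟨a, hae⟩ with hφ
  have φM : φ M = 0 := by
    have h1 : B ⟨M, hMe⟩ = M := Module.Basis.extend_apply_self hli ⟨M, hMe⟩
    have : φ (B ⟨M, hMe⟩) = 0 := by
      simp only [hφ, Module.Basis.repr_self]
      rw [Finsupp.single_apply]
      simp only [ite_eq_right_iff]
      intro h
      exact absurd (congrArg Subtype.val h) haM.symm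
    rwa [h1] at this
  have φa : φ a = 1 := by
    have h1 : B ⟨a, hae⟩ = a := Module.Basis.extend_apply_self hli ⟨a, hae⟩
    have : φ (B ⟨a, hae⟩) = 1 := by
      simp [hφ, Module.Basis.repr_self]
    rwa [h1] at this
  -- key linearity property
  have key : ∀ x y z : ℝ, ∀ t : ℤ, x - y = 2 ^ t * z →
      (φ x : ℝ) - (φ y : ℝ) = 2 ^ t * (φ z : ℝ) := by
    intro x y z t h
    have h2 : x - y = ((2 : ℚ) ^ t : ℚ) • z := by
      rw [Rat.smul_def]
      push_cast
      exact h
    have hq : φ x - φ y = (2 : ℚ) ^ t * φ z := by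
      have : B.repr (x - y) ⟨a, hae⟩ = B.repr (((2 : ℚ) ^ t : ℚ) • z) ⟨a, hae⟩ := by
        rw [h2]
      simpa [hφ, map_sub, map_smul, Finsupp.sub_apply, Finsupp.smul_apply,
        smul_eq_mul] using this
    have := congrArg (fun q : ℚ => (q : ℝ)) hq
    push_cast at this
    exact this
  -- slope function
  set r : ℝ → ℝ := fun x => (φ x : ℝ) / x with hr
  obtain ⟨s, hs, hsmax⟩ := S.exists_max_image r hne
  obtain ⟨u, hu, humin⟩ := S.exists_min_image r hne
  have hspos : 0 < s := hpos s hs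
  have hupos : 0 < u := hpos u hu
  have hrM : r M = 0 := by simp [hr, φM]
  have hra : 0 < r a := by
    simp only [hr, φa, Rat.cast_one]
    positivity
  have hrs : 0 < r s := lt_of_lt_of_le hra (hsmax a ha)
  have hru : r u ≤ 0 := le_of_le_of_eq (humin M hM) hrM
  have hrus : r u < r s := lt_of_le_of_lt hru hrs
  have hcross : (φ u : ℝ) * s < (φ s : ℝ) * u := by
    have := hrus
    simp only [hr] at this
    rw [div_lt_div_iff₀ hupos hspos] at this
    linarith
  have hne' : s ≠ u := by
    intro h
    rw [h] at hrus
    exact lt_irrefl _ hrus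
  rcases lt_or_gt_of_ne hne' with hlt | hgt
  · -- u > s : consider u - s
    obtain ⟨z, hz, t, hzt⟩ := hcdts u hu s hs hlt
    have hzpos : 0 < z := hpos z hz
    have hkey := key u s z t hzt
    have h2t : (0 : ℝ) < 2 ^ t := zpow_pos (by norm_num) t
    have hrz : r z = ((φ u : ℝ) - (φ s : ℝ)) / (u - s) := by
      have hz' : z = (u - s) / 2 ^ t := by
        field_simp [hzt]
        linarith [hzt]
      have hφz : (φ z : ℝ) = ((φ u : ℝ) - (φ s : ℝ)) / 2 ^ t := by
        field_simp [hkey]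
        linarith [hkey]
      simp only [hr]
      rw [hφz, hz']
      have hd : u - s ≠ 0 := sub_ne_zero.mpr (ne_of_gt hlt)
      field_simp
    have hcontra : r z < r u := by
      rw [hrz]
      simp only [hr]
      rw [div_lt_div_iff₀ (by linarith) hupos]
      nlinarith [hcross]
    exact absurd (humin z hz) (not_le.mpr hcontra)
  · -- s > u : consider s - u
    obtain ⟨z, hz, t, hzt⟩ := hcdts s hs u hu hgt
    have hzpos : 0 < z := hpos z hz
    have hkey := key s u z t hzt
    have h2t : (0 : ℝ) < 2 ^ t := zpow_pos (by norm_num) t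
    have hrz : r z = ((φ s : ℝ) - (φ u : ℝ)) / (s - u) := by
      have hz' : z = (s - u) / 2 ^ t := by
        field_simp [hzt]
        linarith [hzt]
      have hφz : (φ z : ℝ) = ((φ s : ℝ) - (φ u : ℝ)) / 2 ^ t := by
        field_simp [hkey]
        linarith [hkey]
      simp only [hr]
      rw [hφz, hz']
      have hd : s - u ≠ 0 := sub_ne_zero.mpr (ne_of_gt hgt)
      field_simp
    have hcontra : r s < r z := by
      rw [hrz]
      simp only [hr]
      rw [div_lt_div_iff₀ hspos (by linarith)]
      nlinarith [hcross]
    exact absurd (hsmax z hz) (not_le.mpr hcontra)
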